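/- Let G be a Tanner graph with finite girth g in which every variable node has degree at least d ≥ 2, and let p be a nonzero nonnegative real vector satisfying the fundamental cone inequalities of G. If g ≡ 2 (mod 4) (i.e., g/2 is odd), then both w_BSC(p) and w_AWGN(p) are at least 1 + Σ_{i=0}^{(g−6)/4} d(d−1)^i. If g ≡ 0 (mod 4) (i.e., g/2 is even), then both w_BSC(p) and w_AWGN(p) are at least 1 + Σ_{i=0}^{(g−8)/4} d(d−1)^i + (d−1)^{(g−4)/4} (empty sums being 0). -/

import Mathlib

/-- A Tanner graph with `n` variable nodes and `m` check nodes, given by the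
neighborhood `N u` (the set of variable nodes adjacent to check node `u`). -/
structure TannerGraph (n m : ℕ) where
  N : Fin m → Finset (Fin n)

/-- The underlying bipartite simple graph of a Tanner graph, on vertex set
`Fin n ⊕ Fin m` (variable nodes on the left, check nodes on the right). -/
def TannerGraph.graph {n m : ℕ} (G : TannerGraph n m) : SimpleGraph (Fin n ⊕ Fin m) :=
  SimpleGraph.fromRel (fun a b =>
    match a, b with
    | Sum.inl i, Sum.inr j => i ∈ G.N j
    | _, _ => False)

/-- The degree of variable node `i` in the Tanner graph. -/
def TannerGraph.varDeg {n m : ℕ} (G : TannerGraph n m) (i : Fin n) : ℕ :=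
  (Finset.univ.filter (fun j : Fin m => i ∈ G.N j)).card

/-- AWGN pseudocodeword weight. -/
noncomputable def wAWGN {n : ℕ} (p : Fin n → ℝ) : ℝ :=
  (∑ i, p i) ^ 2 / (∑ i, (p i) ^ 2)

/-- The sum of the `e` largest components of `p` (for nonnegative `p`),
expressed as the largest sum over sets of `e` coordinates. -/
noncomputable def maxSum {n : ℕ} (p : Fin n → ℝ) (e : ℕ) : ℝ :=
  sSup ((fun S : Finset (Fin n) => ∑ i ∈ S, p i) '' {S | S.card = e})

/-- The smallest number `e` such that the sum of the `e` largest components of `p`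
is at least half of the total sum. -/
noncomputable def eBSC {n : ℕ} (p : Fin n → ℝ) : ℕ :=
  sInf {e : ℕ | (∑ i, p i) / 2 ≤ maxSum p e}

/-- BSC pseudocodeword weight. -/
noncomputable def wBSC {n : ℕ} (p : Fin n → ℝ) : ℝ :=
  if maxSum p (eBSC p) = (∑ i, p i) / 2 then 2 * (eBSC p : ℝ) else 2 * (eBSC p : ℝ) - 1


open SimpleGraph

section GraphLemmas

variable {V : Type*} {G : SimpleGraph V}

/-- Two distinct paths between the same pair of vertices yield a cycle of length at most
the sum of their lengths. -/
lemma cycle_of_two_paths {u v : V} (p q : G.Walk u v) (hp : p.IsPath) (hq : q.IsPath)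
    (hne : p ≠ q) :
    ∃ (a : V) (c : G.Walk a a), c.IsCycle ∧ c.length ≤ p.length + q.length := by
  classical
  set s : Set (Sym2 V) := {e | e ∈ p.edges ∨ e ∈ q.edges} with hs
  set H := SimpleGraph.fromEdgeSet s with hH
  have hmemH : ∀ e : Sym2 V, (e ∈ p.edges ∨ e ∈ q.edges) → e ∈ H.edgeSet := by
    intro e he
    rw [hH, edgeSet_fromEdgeSet]
    refine ⟨he, ?_⟩
    rcases he with he | he
    · exact G.not_isDiag_of_mem_edgeSet (p.edges_subset_edgeSet he)
    · exact G.not_isDiag_of_mem_edgeSet (q.edges_subset_edgeSet he)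
  have hpe : ∀ e ∈ p.edges, e ∈ H.edgeSet := fun e he => hmemH e (Or.inl he)
  have hqe : ∀ e ∈ q.edges, e ∈ H.edgeSet := fun e he => hmemH e (Or.inr he)
  have hHG : H ≤ G := by
    intro a b hab
    rw [hH, fromEdgeSet_adj] at hab
    rcases hab.1 with he | he
    · exact p.edges_subset_edgeSet he
    · exact q.edges_subset_edgeSet he
  have hnac : ¬ H.IsAcyclic := by
    intro hac
    have heq := hac.path_unique ⟨p.transfer H hpe, hp.transfer hpe⟩
      ⟨q.transfer H hqe, hq.transfer hqe⟩
    have h2 : (p.transfer H hpe) = (q.transfer H hqe) := congrArg Subtype.val heq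
    have h3 := congrArg (fun w : H.Walk u v =>
      w.transfer G (fun e he => edgeSet_mono hHG (w.edges_subset_edgeSet he))) h2
    simp only [Walk.transfer_transfer] at h3
    rw [show p.transfer G _ = p from Walk.transfer_self p,
        show q.transfer G _ = q from Walk.transfer_self q] at h3
    exact hne h3
  rw [SimpleGraph.IsAcyclic] at hnac
  push_neg at hnac
  obtain ⟨a, c, hc⟩ := hnac
  have hce : ∀ e ∈ c.edges, e ∈ G.edgeSet := fun e he =>
    edgeSet_mono hHG (c.edges_subset_edgeSet he)
  refine ⟨a, c.transfer G hce, hc.transfer hce, ?_⟩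
  rw [Walk.length_transfer]
  -- bound the length of c by the number of available edges
  have hnodup : c.edges.Nodup := hc.isCircuit.isTrail.edges_nodup
  have hsub : c.edges.toFinset ⊆ p.edges.toFinset ∪ q.edges.toFinset := by
    intro e he
    rw [List.mem_toFinset] at he
    have := c.edges_subset_edgeSet he
    rw [hH, edgeSet_fromEdgeSet] at this
    rcases this.1 with h | h
    · exact Finset.mem_union_left _ (List.mem_toFinset.2 h)
    · exact Finset.mem_union_right _ (List.mem_toFinset.2 h)
  calc c.length = c.edges.length := (Walk.length_edges c).symm
    _ = c.edges.toFinset.card := (List.toFinset_card_of_nodup hnodup).symm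
    _ ≤ (p.edges.toFinset ∪ q.edges.toFinset).card := Finset.card_le_card hsub
    _ ≤ p.edges.toFinset.card + q.edges.toFinset.card := Finset.card_union_le _ _
    _ ≤ p.edges.length + q.edges.length :=
        Nat.add_le_add (List.toFinset_card_le _) (List.toFinset_card_le _)
    _ = p.length + q.length := by rw [Walk.length_edges, Walk.length_edges]

end GraphLemmas

open SimpleGraph

variable {V : Type*} {G : SimpleGraph V}

lemma girth_le_cycle {g : ℕ} (hg : (G.girth : ℕ∞) = (g : ℕ∞)) {a : V} (c : G.Walk a a)
    (hc : c.IsCycle) : g ≤ c.length := by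
  have hgg : G.girth = g := by exact_mod_cast hg
  have h1 : G.egirth ≤ (c.length : ℕ∞) := by
    refine le_trans (iInf_le_of_le a ?_) le_rfl
    exact iInf_le_of_le c (iInf_le _ hc)
  have h2 : G.egirth ≠ ⊤ := by
    intro h
    rw [h] at h1
    exact (lt_irrefl _ (lt_of_le_of_lt h1 (WithTop.coe_lt_top _))).elim
  have h3 : (G.girth : ℕ∞) = G.egirth := ENat.coe_toNat h2
  rw [hgg] at h3
  rw [← h3] at h1
  exact_mod_cast h1

lemma walk_parity (col : V → ZMod 2) (hcol : ∀ x y, G.Adj x y → col y = col x + 1)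
    {x y : V} (w : G.Walk x y) : col y = col x + (w.length : ZMod 2) := by
  induction w with
  | nil => simp
  | cons h w ih =>
    rw [Walk.length_cons]
    push_cast
    rw [ih, hcol _ _ h]
    ring

lemma adj_dist_parity (col : V → ZMod 2) (hcol : ∀ x y, G.Adj x y → col y = col x + 1)
    {ρ x y : V} (hadj : G.Adj x y) (hrx : G.Reachable ρ x) :
    G.Reachable ρ y ∧
      (G.dist ρ y = G.dist ρ x + 1 ∨ G.dist ρ x = G.dist ρ y + 1) := by
  have hry : G.Reachable ρ y := hrx.trans hadj.reachable
  obtain ⟨wx, hwx⟩ := hrx.exists_walk_length_eq_dist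
  obtain ⟨wy, hwy⟩ := hry.exists_walk_length_eq_dist
  have hxy : G.dist ρ y ≤ G.dist ρ x + 1 := by
    have := G.dist_le (wx.concat hadj)
    rwa [Walk.length_concat, hwx] at this
  have hyx : G.dist ρ x ≤ G.dist ρ y + 1 := by
    have := G.dist_le (wy.concat hadj.symm)
    rwa [Walk.length_concat, hwy] at this
  have hne : G.dist ρ y ≠ G.dist ρ x := by
    intro h
    have h1 : col x = col ρ + (G.dist ρ x : ZMod 2) := by
      rw [← hwx]; exact walk_parity col hcol wx
    have h2 : col y = col ρ + (G.dist ρ y : ZMod 2) := by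
      rw [← hwy]; exact walk_parity col hcol wy
    have h3 : col y = col x + 1 := hcol _ _ hadj
    have h4 : col ρ + (G.dist ρ x : ZMod 2) = col ρ + (G.dist ρ x : ZMod 2) + 1 := by
      conv_lhs => rw [← h, ← h2]
      rw [h3, h1]
    exact one_ne_zero (left_eq_add.mp h4)
  constructor
  · exact hry
  · omega

lemma support_dist_le {ρ z : V} {x : V} (w : G.Walk ρ x) (hz : z ∈ w.support) :
    G.dist ρ z ≤ w.length := by
  classical
  exact le_trans (G.dist_le (w.takeUntil z hz)) (Walk.length_takeUntil_le w hz)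

/-- If two distinct vertices at distance ≤ D from ρ are both adjacent to a vertex strictly
farther than D, then there is a cycle of length at most 2D+2. -/
lemma short_cycle_of_two_up {ρ x y₁ y₂ : V} (hne : y₁ ≠ y₂)
    (h1 : G.Adj x y₁) (h2 : G.Adj x y₂) (hr1 : G.Reachable ρ y₁) (hr2 : G.Reachable ρ y₂)
    {D : ℕ} (hd1 : G.dist ρ y₁ ≤ D) (hd2 : G.dist ρ y₂ ≤ D) (hx : D < G.dist ρ x) :
    ∃ (a : V) (c : G.Walk a a), c.IsCycle ∧ c.length ≤ 2 * D + 2 := by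
  obtain ⟨P₁, hP₁, hl₁⟩ := hr1.exists_path_of_dist
  obtain ⟨P₂, hP₂, hl₂⟩ := hr2.exists_path_of_dist
  have hx1 : x ∉ P₁.support := by
    intro hmem
    have := support_dist_le P₁ hmem
    omega
  have hx2 : x ∉ P₂.support := by
    intro hmem
    have := support_dist_le P₂ hmem
    omega
  set R₁ : G.Walk x ρ := Walk.cons h1 P₁.reverse with hR₁
  set R₂ : G.Walk x ρ := Walk.cons h2 P₂.reverse with hR₂
  have hR₁p : R₁.IsPath := by
    rw [hR₁, Walk.cons_isPath_iff]
    exact ⟨hP₁.reverse, by rwa [Walk.support_reverse, List.mem_reverse]⟩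
  have hR₂p : R₂.IsPath := by
    rw [hR₂, Walk.cons_isPath_iff]
    exact ⟨hP₂.reverse, by rwa [Walk.support_reverse, List.mem_reverse]⟩
  have hRne : R₁ ≠ R₂ := by
    intro h
    have hsup := congrArg Walk.support h
    rw [hR₁, hR₂, Walk.support_cons, Walk.support_cons] at hsup
    have h2 : P₁.reverse.support = P₂.reverse.support := List.tail_eq_of_cons_eq hsup
    have e1 : P₁.reverse.support = y₁ :: P₁.reverse.support.tail := Walk.support_eq_cons _
    have e2 : P₂.reverse.support = y₂ :: P₂.reverse.support.tail := Walk.support_eq_cons _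
    rw [e1, e2] at h2
    exact hne (List.head_eq_of_cons_eq h2)
  obtain ⟨a, c, hc, hlen⟩ := cycle_of_two_paths R₁ R₂ hR₁p hR₂p hRne
  refine ⟨a, c, hc, ?_⟩
  have : R₁.length = P₁.length + 1 := by rw [hR₁, Walk.length_cons, Walk.length_reverse]
  have : R₂.length = P₂.length + 1 := by rw [hR₂, Walk.length_cons, Walk.length_reverse]
  omega

namespace TannerGraph

variable {n m : ℕ} (G : TannerGraph n m)

lemma adj_iff (i : Fin n) (j : Fin m) :
    G.graph.Adj (Sum.inl i) (Sum.inr j) ↔ i ∈ G.N j := by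
  rw [TannerGraph.graph, SimpleGraph.fromRel_adj]
  simp

lemma adj_cases {x y : Fin n ⊕ Fin m} (h : G.graph.Adj x y) :
    (∃ i j, x = Sum.inl i ∧ y = Sum.inr j ∧ i ∈ G.N j) ∨
    (∃ i j, x = Sum.inr j ∧ y = Sum.inl i ∧ i ∈ G.N j) := by
  rw [TannerGraph.graph, SimpleGraph.fromRel_adj] at h
  obtain ⟨-, h⟩ := h
  rcases x with i | j <;> rcases y with i' | j'
  · simp at h
  · exact Or.inl ⟨i, j', rfl, rfl, by simpa using h⟩
  · exact Or.inr ⟨i', j, rfl, rfl, by simpa using h⟩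
  · simp at h

/-- coloring for bipartite parity -/
def scol : Fin n ⊕ Fin m → ZMod 2 := Sum.elim (fun _ => 0) (fun _ => 1)

lemma scol_adj {x y : Fin n ⊕ Fin m} (h : G.graph.Adj x y) :
    scol y = scol x + 1 := by
  rcases G.adj_cases h with ⟨i, j, rfl, rfl, -⟩ | ⟨i, j, rfl, rfl, -⟩ <;> simp [scol] <;> decide

end TannerGraph

lemma geom_id (y : ℝ) (t : ℕ) :
    1 + (∑ i ∈ Finset.range t, y * (y - 1) ^ i) + (y - 1) ^ t
      = 2 * ∑ k ∈ Finset.range (t + 1), (y - 1) ^ k := by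
  induction t with
  | zero => simp; ring
  | succ s ih =>
    rw [Finset.sum_range_succ, Finset.sum_range_succ (f := fun k => (y - 1) ^ k) (n := s + 1)]
    have h : 1 + ∑ i ∈ Finset.range s, y * (y - 1) ^ i
        = 2 * ∑ k ∈ Finset.range (s + 1), (y - 1) ^ k - (y - 1) ^ s := by linarith [ih]
    linear_combination h

namespace TannerGraph

variable {n m : ℕ}

lemma key (G : TannerGraph n m) (g d : ℕ) (hd : 2 ≤ d)
    (hdeg : ∀ i : Fin n, d ≤ G.varDeg i)
    (hgirth : (G.graph.girth : ℕ∞) = (g : ℕ∞))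
    (p : Fin n → ℝ) (hp0 : ∀ i, 0 ≤ p i)
    (hcone : ∀ j : Fin m, ∀ i ∈ G.N j, p i ≤ ∑ k ∈ (G.N j).erase i, p k)
    (v0 : Fin n) (hvmax : ∀ i, p i ≤ p v0) :
    (g % 4 = 2 →
      (1 + ∑ i ∈ Finset.range ((g - 2) / 4), (d : ℝ) * ((d : ℝ) - 1) ^ i) * p v0
        ≤ ∑ i, p i) ∧
    (g % 4 = 0 →
      (1 + (∑ i ∈ Finset.range ((g - 4) / 4), (d : ℝ) * ((d : ℝ) - 1) ^ i)
        + ((d : ℝ) - 1) ^ ((g - 4) / 4)) * p v0 ≤ ∑ i, p i) := by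
  classical
  set GG := G.graph with hGG
  -- no short cycles
  have hno : ∀ D : ℕ, 2 * D + 2 < g → ∀ (ρ x y₁ y₂ : Fin n ⊕ Fin m), y₁ ≠ y₂ →
      GG.Adj x y₁ → GG.Adj x y₂ → GG.Reachable ρ y₁ → GG.Reachable ρ y₂ →
      GG.dist ρ y₁ ≤ D → GG.dist ρ y₂ ≤ D → D < GG.dist ρ x → False := by
    intro D hD ρ x y₁ y₂ hne h1 h2 hr1 hr2 hd1 hd2 hx
    obtain ⟨a, c, hc, hlen⟩ := short_cycle_of_two_up hne h1 h2 hr1 hr2 hd1 hd2 hx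
    have := girth_le_cycle hgirth c hc
    omega
  have hnbr : ∀ (ρ x y : Fin n ⊕ Fin m), GG.Adj x y → GG.Reachable ρ x →
      GG.Reachable ρ y ∧
        (GG.dist ρ y = GG.dist ρ x + 1 ∨ GG.dist ρ x = GG.dist ρ y + 1) :=
    fun ρ x y hadj hr => adj_dist_parity scol (fun a b h => G.scol_adj h) hadj hr
  -- levels
  set lvl : (Fin n ⊕ Fin m) → ℕ → Finset (Fin n) := fun ρ δ =>
    Finset.univ.filter
      (fun v => GG.Reachable ρ (Sum.inl v) ∧ GG.dist ρ (Sum.inl v) = δ) with hlvl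
  have hlvl_mem : ∀ ρ δ v, v ∈ lvl ρ δ ↔
      GG.Reachable ρ (Sum.inl v) ∧ GG.dist ρ (Sum.inl v) = δ := by
    intro ρ δ v; simp [hlvl]
  -- the key expansion step
  have advance : ∀ (ρ : Fin n ⊕ Fin m) (δ : ℕ), 2 * δ + 4 < g →
      ((d - (if δ = 0 then 0 else 1) : ℕ) : ℝ) * (∑ v ∈ lvl ρ δ, p v)
        ≤ ∑ v ∈ lvl ρ (δ + 2), p v := by
    intro ρ δ hδ
    set chk : Finset (Fin m) := Finset.univ.filter
      (fun u => GG.Reachable ρ (Sum.inr u) ∧ GG.dist ρ (Sum.inr u) = δ + 1) with hchk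
    set child : Fin m → Finset (Fin n) := fun u => (G.N u).filter
      (fun x => GG.Reachable ρ (Sum.inl x) ∧ GG.dist ρ (Sum.inl x) = δ + 2) with hchild
    -- parent uniqueness
    have hUP : ∀ u ∈ chk, ∀ w ∈ G.N u, ∀ w' ∈ G.N u,
        GG.Reachable ρ (Sum.inl w) → GG.Reachable ρ (Sum.inl w') →
        GG.dist ρ (Sum.inl w) = δ → GG.dist ρ (Sum.inl w') = δ → w = w' := by
      intro u hu w hw w' hw' hrw hrw' hdw hdw'
      by_contra hne
      obtain ⟨-, hru, hdu⟩ := Finset.mem_filter.mp hu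
      exact hno δ (by omega) ρ (Sum.inr u) (Sum.inl w) (Sum.inl w')
        (by simpa using hne) ((G.adj_iff w u).mpr hw).symm ((G.adj_iff w' u).mpr hw').symm
        hrw hrw' (by omega) (by omega) (by omega)
    -- per-check flow
    have hflow : ∀ u ∈ chk, ∀ w ∈ G.N u, GG.Reachable ρ (Sum.inl w) →
        GG.dist ρ (Sum.inl w) = δ → p w ≤ ∑ x ∈ child u, p x := by
      intro u hu w hw hrw hdw
      have hru : GG.Reachable ρ (Sum.inr u) := (Finset.mem_filter.mp hu).2.1
      have hdu : GG.dist ρ (Sum.inr u) = δ + 1 := (Finset.mem_filter.mp hu).2.2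
      have hsub : (G.N u).erase w ⊆ child u := by
        intro x hx
        obtain ⟨hxne, hxN⟩ := Finset.mem_erase.mp hx
        have hadj : GG.Adj (Sum.inr u) (Sum.inl x) := ((G.adj_iff x u).mpr hxN).symm
        obtain ⟨hrx, hdx⟩ := hnbr ρ _ _ hadj hru
        rcases hdx with hdx | hdx
        · exact Finset.mem_filter.mpr ⟨hxN, hrx, by omega⟩
        · exact absurd (hUP u hu x hxN w hw hrx hrw (by omega) hdw) hxne
      exact le_trans (hcone u w hw)
        (Finset.sum_le_sum_of_subset_of_nonneg hsub (fun i _ _ => hp0 i))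
    -- children of distinct checks are disjoint
    have hdisj : (↑chk : Set (Fin m)).PairwiseDisjoint child := by
      intro u hu u' hu' hne
      simp only [Function.onFun]
      rw [Finset.disjoint_left]
      intro x hx hx'
      obtain ⟨hxN, hrx, hdx⟩ := Finset.mem_filter.mp hx
      obtain ⟨hxN', -, -⟩ := Finset.mem_filter.mp hx'
      simp only [hchk, Finset.coe_filter, Set.mem_setOf_eq, Finset.mem_univ, true_and]
        at hu hu'
      exact hno (δ + 1) (by omega) ρ (Sum.inl x) (Sum.inr u) (Sum.inr u')
        (by simpa using hne) ((G.adj_iff x u).mpr hxN) ((G.adj_iff x u').mpr hxN')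
        hu.1 hu'.1 (by omega) (by omega) (by omega)
    -- step 4: total flow into level δ+2
    have h4 : ∑ u ∈ chk, ∑ x ∈ child u, p x ≤ ∑ x ∈ lvl ρ (δ + 2), p x := by
      rw [← Finset.sum_biUnion hdisj]
      refine Finset.sum_le_sum_of_subset_of_nonneg ?_ (fun i _ _ => hp0 i)
      intro x hx
      obtain ⟨u, hu, hxu⟩ := Finset.mem_biUnion.mp hx
      obtain ⟨hxN, hrx, hdx⟩ := Finset.mem_filter.mp hxu
      exact (hlvl_mem ρ (δ + 2) x).mpr ⟨hrx, hdx⟩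
    -- counting checks above each variable node of level δ
    set i0 : ℕ := if δ = 0 then 0 else 1 with hi0
    set chkOf : Fin n → Finset (Fin m) := fun w => chk.filter (fun u => w ∈ G.N u) with hchkOf
    have hcount : ∀ w ∈ lvl ρ δ, d - i0 ≤ (chkOf w).card := by
      intro w hw
      obtain ⟨hrw, hdw⟩ := (hlvl_mem _ _ _).mp hw
      set cw : Finset (Fin m) := Finset.univ.filter (fun j : Fin m => w ∈ G.N j) with hcwdef
      have hcw : d ≤ cw.card := hdeg w
      set cwD : Finset (Fin m) := cw.filter (fun j => GG.dist ρ (Sum.inr j) + 1 = δ) with hcwD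
      have hsplit : cw ⊆ cwD ∪ chkOf w := by
        intro j hj
        have hwj : w ∈ G.N j := (Finset.mem_filter.mp hj).2
        have hadj : GG.Adj (Sum.inl w) (Sum.inr j) := (G.adj_iff w j).mpr hwj
        obtain ⟨hrj, hdj⟩ := hnbr ρ _ _ hadj hrw
        rcases hdj with h | h
        · refine Finset.mem_union_right _ (Finset.mem_filter.mpr ⟨?_, hwj⟩)
          exact Finset.mem_filter.mpr ⟨Finset.mem_univ _, hrj, by omega⟩
        · exact Finset.mem_union_left _ (Finset.mem_filter.mpr ⟨hj, by omega⟩)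
      have hcwDcard : cwD.card ≤ i0 := by
        rw [hi0]
        split_ifs with h0
        · have : cwD = ∅ := by
            apply Finset.eq_empty_of_forall_notMem
            intro j hj
            have := (Finset.mem_filter.mp hj).2
            omega
          simp [this]
        · rw [Finset.card_le_one]
          intro j hj j' hj'
          by_contra hne
          have hwj : w ∈ G.N j := (Finset.mem_filter.mp ((Finset.mem_filter.mp hj).1)).2
          have hwj' : w ∈ G.N j' := (Finset.mem_filter.mp ((Finset.mem_filter.mp hj').1)).2
          have hdj : GG.dist ρ (Sum.inr j) + 1 = δ := (Finset.mem_filter.mp hj).2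
          have hdj' : GG.dist ρ (Sum.inr j') + 1 = δ := (Finset.mem_filter.mp hj').2
          have hadj : GG.Adj (Sum.inl w) (Sum.inr j) := (G.adj_iff w j).mpr hwj
          have hadj' : GG.Adj (Sum.inl w) (Sum.inr j') := (G.adj_iff w j').mpr hwj'
          obtain ⟨hrj, -⟩ := hnbr ρ _ _ hadj hrw
          obtain ⟨hrj', -⟩ := hnbr ρ _ _ hadj' hrw
          exact hno (δ - 1) (by omega) ρ (Sum.inl w) (Sum.inr j) (Sum.inr j')
            (by simpa using hne) hadj hadj' hrj hrj'
            (by omega) (by omega) (by omega)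
      have hle := le_trans (Finset.card_le_card hsplit) (Finset.card_union_le cwD (chkOf w))
      omega
    -- the chkOf sets are disjoint across the level
    have hdisj2 : (↑(lvl ρ δ) : Set (Fin n)).PairwiseDisjoint chkOf := by
      intro w hw w' hw' hne
      simp only [Function.onFun]
      rw [Finset.disjoint_left]
      intro u hu hu'
      obtain ⟨huchk, hwN⟩ := Finset.mem_filter.mp hu
      obtain ⟨-, hwN'⟩ := Finset.mem_filter.mp hu'
      obtain ⟨hrw, hdw⟩ := (hlvl_mem _ _ _).mp (Finset.mem_coe.mp hw)
      obtain ⟨hrw', hdw'⟩ := (hlvl_mem _ _ _).mp (Finset.mem_coe.mp hw')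
      exact hne (hUP u huchk w hwN w' hwN' hrw hrw' hdw hdw')
    -- combine
    calc ((d - i0 : ℕ) : ℝ) * ∑ v ∈ lvl ρ δ, p v
        = ∑ w ∈ lvl ρ δ, ((d - i0 : ℕ) : ℝ) * p w := by rw [Finset.mul_sum]
      _ ≤ ∑ w ∈ lvl ρ δ, ((chkOf w).card : ℝ) * p w := by
          refine Finset.sum_le_sum (fun w hw => ?_)
          exact mul_le_mul_of_nonneg_right (Nat.cast_le.mpr (hcount w hw)) (hp0 w)
      _ = ∑ w ∈ lvl ρ δ, ∑ _u ∈ chkOf w, p w := by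
          refine Finset.sum_congr rfl (fun w _ => ?_)
          rw [Finset.sum_const, nsmul_eq_mul]
      _ ≤ ∑ w ∈ lvl ρ δ, ∑ u ∈ chkOf w, ∑ x ∈ child u, p x := by
          refine Finset.sum_le_sum (fun w hw => Finset.sum_le_sum (fun u hu => ?_))
          obtain ⟨huchk, hwN⟩ := Finset.mem_filter.mp hu
          obtain ⟨hrw, hdw⟩ := (hlvl_mem _ _ _).mp hw
          exact hflow u huchk w hwN hrw hdw
      _ = ∑ u ∈ (lvl ρ δ).biUnion chkOf, ∑ x ∈ child u, p x :=
          (Finset.sum_biUnion hdisj2).symm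
      _ ≤ ∑ u ∈ chk, ∑ x ∈ child u, p x := by
          refine Finset.sum_le_sum_of_subset_of_nonneg ?_
            (fun u _ _ => Finset.sum_nonneg (fun x _ => hp0 x))
          intro u hu
          obtain ⟨w, -, hw⟩ := Finset.mem_biUnion.mp hu
          exact (Finset.mem_filter.mp hw).1
      _ ≤ ∑ x ∈ lvl ρ (δ + 2), p x := h4
  -- level sets at distinct distances are disjoint
  have hlvldisj : ∀ (ρ : Fin n ⊕ Fin m) (a b : ℕ), a ≠ b → Disjoint (lvl ρ a) (lvl ρ b) := by
    intro ρ a b hab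
    rw [Finset.disjoint_left]
    intro v hv hv'
    obtain ⟨-, h1⟩ := (hlvl_mem _ _ _).mp hv
    obtain ⟨-, h2⟩ := (hlvl_mem _ _ _).mp hv'
    omega
  have hdpos : (0:ℝ) ≤ (d:ℝ) - 1 := by
    have : (2:ℝ) ≤ (d:ℝ) := by exact_mod_cast hd
    linarith
  constructor
  · -- case g ≡ 2 (mod 4)
    intro hA
    have hg2 : g ≠ 2 := by
      intro h2
      have hgg : GG.girth = g := by exact_mod_cast hgirth
      have hnac : ¬ GG.IsAcyclic := by
        intro hac
        rw [SimpleGraph.girth_eq_zero.mpr hac] at hgg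
        omega
      have := SimpleGraph.three_le_girth hnac
      omega
    set t := (g - 2) / 4 with ht
    have hgt : g = 4 * t + 2 := by omega
    set ρ : Fin n ⊕ Fin m := Sum.inl v0 with hρ
    have hroot : lvl ρ 0 = {v0} := by
      ext v
      rw [hlvl_mem, Finset.mem_singleton]
      constructor
      · rintro ⟨hr, hd0⟩
        have h := hr.dist_eq_zero_iff.mp hd0
        rw [hρ] at h
        exact (Sum.inl.inj h.symm)
      · intro h
        subst h
        constructor
        · rw [hρ]
        · rw [hρ]
          exact SimpleGraph.dist_self
    set S : ℕ → ℝ := fun k => ∑ v ∈ lvl ρ (2 * k), p v with hS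
    have hS0 : S 0 = p v0 := by simp [hS, hroot]
    have hS1 : (d : ℝ) * p v0 ≤ S 1 := by
      have h := advance ρ 0 (by omega)
      rw [if_pos rfl, Nat.sub_zero] at h
      simpa [hS, hroot] using h
    have hstep : ∀ k, 1 ≤ k → k + 1 ≤ t → ((d:ℝ) - 1) * S k ≤ S (k + 1) := by
      intro k hk1 hkt
      have h := advance ρ (2 * k) (by omega)
      rw [if_neg (by omega)] at h
      have hcast : ((d - 1 : ℕ) : ℝ) = (d : ℝ) - 1 := by
        rw [Nat.cast_sub (by omega : 1 ≤ d)]; norm_num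
      rw [hcast] at h
      have hidx : 2 * k + 2 = 2 * (k + 1) := by ring
      rw [hidx] at h
      simpa [hS] using h
    have hind : ∀ j, j + 1 ≤ t → (d:ℝ) * ((d:ℝ) - 1) ^ j * p v0 ≤ S (j + 1) := by
      intro j
      induction j with
      | zero => intro _; simpa using hS1
      | succ i ih =>
        intro hle
        have h1 : (d:ℝ) * ((d:ℝ) - 1) ^ i * p v0 ≤ S (i + 1) := ih (by omega)
        have h2 := hstep (i + 1) (by omega) (by omega)
        calc (d:ℝ) * ((d:ℝ) - 1) ^ (i + 1) * p v0
            = ((d:ℝ) - 1) * ((d:ℝ) * ((d:ℝ) - 1) ^ i * p v0) := by ring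
          _ ≤ ((d:ℝ) - 1) * S (i + 1) := mul_le_mul_of_nonneg_left h1 hdpos
          _ ≤ S (i + 2) := h2
    have hsumlvl : ∑ k ∈ Finset.range (t + 1), S k ≤ ∑ i, p i := by
      have hpd : (↑(Finset.range (t + 1)) : Set ℕ).PairwiseDisjoint
          (fun k => lvl ρ (2 * k)) := by
        intro a _ b _ hab
        exact hlvldisj ρ (2 * a) (2 * b) (by omega)
      calc ∑ k ∈ Finset.range (t + 1), S k
          = ∑ v ∈ (Finset.range (t + 1)).biUnion (fun k => lvl ρ (2 * k)), p v :=
            (Finset.sum_biUnion hpd).symm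
        _ ≤ ∑ i, p i := Finset.sum_le_sum_of_subset_of_nonneg
            (Finset.subset_univ _) (fun i _ _ => hp0 i)
    calc (1 + ∑ i ∈ Finset.range t, (d : ℝ) * ((d : ℝ) - 1) ^ i) * p v0
        = p v0 + ∑ i ∈ Finset.range t, (d:ℝ) * ((d:ℝ) - 1) ^ i * p v0 := by
          rw [add_mul, one_mul, Finset.sum_mul]
      _ ≤ S 0 + ∑ i ∈ Finset.range t, S (i + 1) := by
          refine add_le_add (le_of_eq hS0.symm)
            (Finset.sum_le_sum fun i hi => hind i ?_)
          have := Finset.mem_range.mp hi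
          omega
      _ = ∑ k ∈ Finset.range (t + 1), S k := by
          rw [Finset.sum_range_succ' S t, add_comm]
      _ ≤ ∑ i, p i := hsumlvl
  · -- case g ≡ 0 (mod 4)
    intro hB
    set t := (g - 4) / 4 with ht
    obtain ⟨u0, hu0⟩ : ∃ u0, v0 ∈ G.N u0 := by
      have hvd := hdeg v0
      rw [TannerGraph.varDeg] at hvd
      have hpos : 0 < (Finset.univ.filter (fun j : Fin m => v0 ∈ G.N j)).card := by omega
      obtain ⟨j, hj⟩ := Finset.card_pos.mp hpos
      exact ⟨j, (Finset.mem_filter.mp hj).2⟩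
    set ρ : Fin n ⊕ Fin m := Sum.inr u0 with hρ
    set S : ℕ → ℝ := fun k => ∑ v ∈ lvl ρ (2 * k + 1), p v with hS
    have hS0 : 2 * p v0 ≤ S 0 := by
      have hsub : G.N u0 ⊆ lvl ρ 1 := by
        intro v hv
        have hadj : GG.Adj ρ (Sum.inl v) := by
          rw [hρ]; exact ((G.adj_iff v u0).mpr hv).symm
        exact (hlvl_mem _ _ _).mpr ⟨hadj.reachable, (GG.dist_eq_one_iff_adj).mpr hadj⟩
      have h1 : ∑ v ∈ G.N u0, p v ≤ S 0 := by
        have hidx : 2 * 0 + 1 = 1 := by norm_num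
        rw [hS]
        simp only [hidx]
        exact Finset.sum_le_sum_of_subset_of_nonneg hsub (fun i _ _ => hp0 i)
      have h2 : 2 * p v0 ≤ ∑ v ∈ G.N u0, p v := by
        have hc := hcone u0 v0 hu0
        have he := Finset.add_sum_erase (G.N u0) p hu0
        linarith
      linarith
    have hstep : ∀ k, k + 1 ≤ t → ((d:ℝ) - 1) * S k ≤ S (k + 1) := by
      intro k hkt
      have h := advance ρ (2 * k + 1) (by omega)
      rw [if_neg (by omega)] at h
      have hcast : ((d - 1 : ℕ) : ℝ) = (d : ℝ) - 1 := by
        rw [Nat.cast_sub (by omega : 1 ≤ d)]; norm_num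
      rw [hcast] at h
      have hidx : 2 * k + 1 + 2 = 2 * (k + 1) + 1 := by ring
      rw [hidx] at h
      simpa [hS] using h
    have hind : ∀ k, k ≤ t → ((d:ℝ) - 1) ^ k * (2 * p v0) ≤ S k := by
      intro k
      induction k with
      | zero => intro _; simpa using hS0
      | succ i ih =>
        intro hle
        have h1 : ((d:ℝ) - 1) ^ i * (2 * p v0) ≤ S i := ih (by omega)
        have h2 := hstep i (by omega)
        calc ((d:ℝ) - 1) ^ (i + 1) * (2 * p v0)
            = ((d:ℝ) - 1) * (((d:ℝ) - 1) ^ i * (2 * p v0)) := by ring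
          _ ≤ ((d:ℝ) - 1) * S i := mul_le_mul_of_nonneg_left h1 hdpos
          _ ≤ S (i + 1) := h2
    have hsumlvl : ∑ k ∈ Finset.range (t + 1), S k ≤ ∑ i, p i := by
      have hpd : (↑(Finset.range (t + 1)) : Set ℕ).PairwiseDisjoint
          (fun k => lvl ρ (2 * k + 1)) := by
        intro a _ b _ hab
        exact hlvldisj ρ (2 * a + 1) (2 * b + 1) (by omega)
      calc ∑ k ∈ Finset.range (t + 1), S k
          = ∑ v ∈ (Finset.range (t + 1)).biUnion (fun k => lvl ρ (2 * k + 1)), p v :=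
            (Finset.sum_biUnion hpd).symm
        _ ≤ ∑ i, p i := Finset.sum_le_sum_of_subset_of_nonneg
            (Finset.subset_univ _) (fun i _ _ => hp0 i)
    have hgeom := geom_id (d : ℝ) t
    calc (1 + (∑ i ∈ Finset.range t, (d : ℝ) * ((d : ℝ) - 1) ^ i)
            + ((d : ℝ) - 1) ^ t) * p v0
        = (2 * ∑ k ∈ Finset.range (t + 1), ((d:ℝ) - 1) ^ k) * p v0 := by rw [hgeom]
      _ = ∑ k ∈ Finset.range (t + 1), ((d:ℝ) - 1) ^ k * (2 * p v0) := by
          rw [mul_comm (2:ℝ), mul_assoc, Finset.sum_mul]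
      _ ≤ ∑ k ∈ Finset.range (t + 1), S k :=
          Finset.sum_le_sum (fun k hk => hind k (by
            have := Finset.mem_range.mp hk
            omega))
      _ ≤ ∑ i, p i := hsumlvl

end TannerGraph

lemma weight_bounds {n : ℕ} (p : Fin n → ℝ) (hp0 : ∀ i, 0 ≤ p i) (v0 : Fin n)
    (hvpos : 0 < p v0) (hvmax : ∀ i, p i ≤ p v0) (B : ℕ)
    (hB : (B : ℝ) * p v0 ≤ ∑ i, p i) : (B : ℝ) ≤ wBSC p ∧ (B : ℝ) ≤ wAWGN p := by
  classical
  have hsum0 : p v0 ≤ ∑ i, p i := Finset.single_le_sum (fun i _ => hp0 i) (Finset.mem_univ v0)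
  have hsum_pos : 0 < ∑ i, p i := lt_of_lt_of_le hvpos hsum0
  constructor
  · -- BSC
    have hbdd : ∀ e : ℕ,
        BddAbove ((fun S : Finset (Fin n) => ∑ i ∈ S, p i) '' {S | S.card = e}) :=
      fun e => (Set.toFinite _).bddAbove
    have hub : ∀ e : ℕ, maxSum p e ≤ (e : ℝ) * p v0 := by
      intro e
      rw [maxSum]
      apply Real.sSup_le
      · rintro x ⟨S, hS, rfl⟩
        have hSc : S.card = e := hS
        calc ∑ i ∈ S, p i ≤ ∑ i ∈ S, p v0 := Finset.sum_le_sum (fun i _ => hvmax i)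
          _ = S.card * p v0 := by rw [Finset.sum_const, nsmul_eq_mul]
          _ = e * p v0 := by rw [hSc]
      · positivity
    have hmemn : (∑ i, p i) ≤ maxSum p n := by
      rw [maxSum]
      apply le_csSup (hbdd n)
      exact ⟨Finset.univ, by simp, rfl⟩
    have hne : {e : ℕ | (∑ i, p i) / 2 ≤ maxSum p e}.Nonempty :=
      ⟨n, by rw [Set.mem_setOf_eq]; linarith⟩
    have hemem : (∑ i, p i) / 2 ≤ maxSum p (eBSC p) := Nat.sInf_mem hne
    rw [wBSC]
    split_ifs with hcase
    · have h1 : (B : ℝ) * p v0 ≤ (2 * (eBSC p : ℝ)) * p v0 := by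
        calc (B : ℝ) * p v0 ≤ ∑ i, p i := hB
          _ = 2 * ((∑ i, p i) / 2) := by ring
          _ = 2 * maxSum p (eBSC p) := by rw [hcase]
          _ ≤ 2 * ((eBSC p : ℝ) * p v0) := by linarith [hub (eBSC p)]
          _ = (2 * (eBSC p : ℝ)) * p v0 := by ring
      exact (mul_le_mul_iff_of_pos_right hvpos).mp h1
    · have hlt : (∑ i, p i) / 2 < maxSum p (eBSC p) := lt_of_le_of_ne hemem (Ne.symm hcase)
      have h1 : (B : ℝ) * p v0 < (2 * (eBSC p : ℝ)) * p v0 := by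
        calc (B : ℝ) * p v0 ≤ ∑ i, p i := hB
          _ = 2 * ((∑ i, p i) / 2) := by ring
          _ < 2 * maxSum p (eBSC p) := by linarith
          _ ≤ (2 * (eBSC p : ℝ)) * p v0 := by
              have := hub (eBSC p)
              have := mul_le_mul_of_nonneg_left (hub (eBSC p)) (by norm_num : (0:ℝ) ≤ 2)
              linarith
      have h2 : (B : ℝ) < 2 * (eBSC p : ℝ) := (mul_lt_mul_iff_of_pos_right hvpos).mp h1
      have h3 : B < 2 * eBSC p := by exact_mod_cast h2
      have h4 : B + 1 ≤ 2 * eBSC p := h3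
      have h5 : (B : ℝ) + 1 ≤ 2 * (eBSC p : ℝ) := by exact_mod_cast h4
      linarith
  · -- AWGN
    have hsq_pos : 0 < ∑ i, (p i) ^ 2 :=
      Finset.sum_pos' (fun i _ => sq_nonneg (p i)) ⟨v0, Finset.mem_univ v0, by positivity⟩
    have hsq_le : ∑ i, (p i) ^ 2 ≤ p v0 * ∑ i, p i := by
      rw [Finset.mul_sum]
      refine Finset.sum_le_sum (fun i _ => ?_)
      rw [sq]
      exact mul_le_mul_of_nonneg_right (hvmax i) (hp0 i)
    rw [wAWGN, le_div_iff₀ hsq_pos]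
    calc (B : ℝ) * ∑ i, (p i) ^ 2
        ≤ (B : ℝ) * (p v0 * ∑ i, p i) :=
          mul_le_mul_of_nonneg_left hsq_le (Nat.cast_nonneg B)
      _ = ((B : ℝ) * p v0) * ∑ i, p i := by ring
      _ ≤ (∑ i, p i) * ∑ i, p i := mul_le_mul_of_nonneg_right hB hsum_pos.le
      _ = (∑ i, p i) ^ 2 := (sq _).symm


theorem tree_bound_basic {n m : ℕ} (G : TannerGraph n m) (g d : ℕ)
    (hd : 2 ≤ d) (hdeg : ∀ i : Fin n, d ≤ G.varDeg i)
    (hgirth : G.graph.girth = (g : ℕ∞))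
    (p : Fin n → ℝ) (hp0 : ∀ i, 0 ≤ p i) (hpne : p ≠ 0)
    (hcone : ∀ j : Fin m, ∀ i ∈ G.N j, p i ≤ ∑ k ∈ (G.N j).erase i, p k) :
    (g % 4 = 2 →
      1 + ∑ i ∈ Finset.range ((g - 2) / 4), (d : ℝ) * ((d : ℝ) - 1) ^ i ≤ wBSC p ∧
      1 + ∑ i ∈ Finset.range ((g - 2) / 4), (d : ℝ) * ((d : ℝ) - 1) ^ i ≤ wAWGN p) ∧
    (g % 4 = 0 →
      1 + (∑ i ∈ Finset.range ((g - 4) / 4), (d : ℝ) * ((d : ℝ) - 1) ^ i)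
          + ((d : ℝ) - 1) ^ ((g - 4) / 4) ≤ wBSC p ∧
      1 + (∑ i ∈ Finset.range ((g - 4) / 4), (d : ℝ) * ((d : ℝ) - 1) ^ i)
          + ((d : ℝ) - 1) ^ ((g - 4) / 4) ≤ wAWGN p) := by

  classical
  have hex : ∃ i, p i ≠ 0 := by rwa [Function.ne_iff] at hpne
  obtain ⟨i0, hi0⟩ := hex
  obtain ⟨v0, -, hvmax⟩ := Finset.exists_max_image Finset.univ p ⟨i0, Finset.mem_univ i0⟩
  have hvmax' : ∀ i, p i ≤ p v0 := fun i => hvmax i (Finset.mem_univ i)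
  have hvpos : 0 < p v0 :=
    lt_of_lt_of_le (lt_of_le_of_ne (hp0 i0) (Ne.symm hi0)) (hvmax' i0)
  have hkey := TannerGraph.key G g d hd hdeg hgirth p hp0 hcone v0 hvmax'
  constructor
  · intro hA
    have hb := hkey.1 hA
    set t := (g - 2) / 4 with ht
    have hcast : ((1 + ∑ i ∈ Finset.range t, d * (d - 1) ^ i : ℕ) : ℝ)
        = 1 + ∑ i ∈ Finset.range t, (d : ℝ) * ((d : ℝ) - 1) ^ i := by
      push_cast [Nat.cast_sub (show 1 ≤ d by omega)]
      ring
    have hw := weight_bounds p hp0 v0 hvpos hvmax'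
      (1 + ∑ i ∈ Finset.range t, d * (d - 1) ^ i) (by rw [hcast]; exact hb)
    rw [hcast] at hw
    exact hw
  · intro hB
    have hb := hkey.2 hB
    set t := (g - 4) / 4 with ht
    have hcast : ((1 + (∑ i ∈ Finset.range t, d * (d - 1) ^ i) + (d - 1) ^ t : ℕ) : ℝ)
        = 1 + (∑ i ∈ Finset.range t, (d : ℝ) * ((d : ℝ) - 1) ^ i)
          + ((d : ℝ) - 1) ^ t := by
      push_cast [Nat.cast_sub (show 1 ≤ d by omega)]
      ring
    have hw := weight_bounds p hp0 v0 hvpos hvmax'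
      (1 + (∑ i ∈ Finset.range t, d * (d - 1) ^ i) + (d - 1) ^ t) (by rw [hcast]; exact hb)
    rw [hcast] at hw
    exact hw
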